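/- Let A ∈ ℝ^{n×n}, B ∈ ℝ^{n×m}, E ∈ ℝ^{n×z}, P ∈ Sym(n), R ∈ ℝ^{n×n}, L ∈ ℝ^{m×n}, and suppose R + Rᵀ − P ≻ 0. Then the block matrix [[P − EEᵀ, AR + BL], [(AR + BL)ᵀ, R + Rᵀ − P]] is positive definite if and only if [I, Aᵀ, Bᵀ]-quadratic form holds: the matrix diag(P − EEᵀ, −[R; L](R + Rᵀ − P)⁻¹[R; L]ᵀ) ∈ Sym(2n+m), sandwiched as [I; Aᵀ; Bᵀ]ᵀ (·) [I; Aᵀ; Bᵀ], is positive definite. -/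

import Mathlib

open Matrix

private theorem posDef_fromBlocks₂₂ {m n : Type*} [Fintype m] [Fintype n] [DecidableEq n]
    (A : Matrix m m ℝ) (B : Matrix m n ℝ) {D : Matrix n n ℝ} (hD : D.PosDef) [Invertible D] :
    (fromBlocks A B Bᴴ D).PosDef ↔ (A - B * D⁻¹ * Bᴴ).PosDef := by
  rw [posDef_iff_dotProduct_mulVec, posDef_iff_dotProduct_mulVec, IsHermitian.fromBlocks₂₂ _ _ hD.1]
  constructor
  · refine fun h => ⟨h.1, fun x hx => ?_⟩
    have := h.2 (x := x ⊕ᵥ -((D⁻¹ * Bᴴ) *ᵥ x))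
      (fun hc => hx (funext fun i => by simpa using congrFun hc (Sum.inl i)))
    rw [dotProduct_mulVec, Matrix.schur_complement_eq₂₂ A B _ _ hD.1,
      add_neg_cancel, dotProduct_zero, zero_add] at this
    rw [dotProduct_mulVec]; exact this
  · refine fun h => ⟨h.1, fun x hx => ?_⟩
    rw [dotProduct_mulVec, ← Sum.elim_comp_inl_inr x,
      Matrix.schur_complement_eq₂₂ A B _ _ hD.1]
    by_cases hx1 : x ∘ Sum.inl = 0
    · have hx2 : x ∘ Sum.inr ≠ 0 := by
        intro hc; apply hx
        rw [← Sum.elim_comp_inl_inr x, hx1, hc]; ext (i | i) <;> rfl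
      have h1 : (D⁻¹ * Bᴴ) *ᵥ (x ∘ Sum.inl) + x ∘ Sum.inr = x ∘ Sum.inr := by
        rw [hx1, mulVec_zero, zero_add]
      rw [h1, hx1]
      have h2 := hD.dotProduct_mulVec_pos hx2
      simpa [dotProduct_mulVec] using h2
    · have h1 := h.2 (x := x ∘ Sum.inl) hx1
      have h2 := (posSemidef_iff_dotProduct_mulVec.mp hD.posSemidef).2 ((D⁻¹ * Bᴴ) *ᵥ (x ∘ Sum.inl) + x ∘ Sum.inr)
      rw [dotProduct_mulVec] at h1
      apply add_pos_of_nonneg_of_pos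
      · simpa [dotProduct_mulVec] using h2
      · exact h1

/-- The closed-loop `H₂` LMI block is positive definite iff the corresponding
quadratic matrix inequality in `(A, B)` is (strictly) satisfied. -/
theorem lmi_qmi_equivalence
    (n m z : ℕ)
    (A : Matrix (Fin n) (Fin n) ℝ) (B : Matrix (Fin n) (Fin m) ℝ)
    (E : Matrix (Fin n) (Fin z) ℝ)
    (P R : Matrix (Fin n) (Fin n) ℝ) (L : Matrix (Fin m) (Fin n) ℝ)
    (hP : Pᵀ = P) (hRRP : (R + Rᵀ - P).PosDef) :
    (Matrix.fromBlocks (P - E * Eᵀ) (A * R + B * L)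
        (A * R + B * L)ᵀ (R + Rᵀ - P)).PosDef ↔
      (let RL : Matrix (Fin n ⊕ Fin m) (Fin n) ℝ := Matrix.fromRows R L
       let D : Matrix (Fin n ⊕ (Fin n ⊕ Fin m)) (Fin n ⊕ (Fin n ⊕ Fin m)) ℝ :=
         Matrix.fromBlocks (P - E * Eᵀ) 0 0 (-(RL * (R + Rᵀ - P)⁻¹ * RLᵀ))
       let Z : Matrix (Fin n ⊕ (Fin n ⊕ Fin m)) (Fin n) ℝ :=
         Matrix.fromRows (1 : Matrix (Fin n) (Fin n) ℝ) (Matrix.fromRows Aᵀ Bᵀ)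
       (Zᵀ * D * Z).PosDef) := by
  simp only []
  set S := R + Rᵀ - P with hS
  set M := A * R + B * L with hM
  set Q := P - E * Eᵀ with hQ
  haveI : Invertible S := hRRP.isUnit.invertible
  have hMT : Mᵀ = Mᴴ := (Matrix.conjTranspose_eq_transpose_of_trivial M).symm
  have hW : (Matrix.fromRows Aᵀ Bᵀ)ᵀ = Matrix.fromCols A B := by
    rw [Matrix.transpose_fromRows, Matrix.transpose_transpose, Matrix.transpose_transpose]
  have e1 : Matrix.fromCols A B * Matrix.fromRows R L = M := by
    rw [Matrix.fromCols_mul_fromRows]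
  have e2 : (Matrix.fromRows R L)ᵀ * Matrix.fromRows Aᵀ Bᵀ = Mᵀ := by
    have := congrArg Matrix.transpose e1
    rwa [Matrix.transpose_mul, Matrix.transpose_fromCols] at this
  have key : (Matrix.fromRows (1 : Matrix (Fin n) (Fin n) ℝ) (Matrix.fromRows Aᵀ Bᵀ))ᵀ *
      (Matrix.fromBlocks Q 0 0
        (-((Matrix.fromRows R L) * S⁻¹ * (Matrix.fromRows R L)ᵀ))) *
      (Matrix.fromRows (1 : Matrix (Fin n) (Fin n) ℝ) (Matrix.fromRows Aᵀ Bᵀ)) =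
      Q - M * S⁻¹ * Mᵀ := by
    rw [Matrix.mul_assoc, Matrix.fromBlocks_mul_fromRows, Matrix.transpose_fromRows,
      Matrix.transpose_one, hW, Matrix.fromCols_mul_fromRows]
    simp only [Matrix.one_mul, Matrix.mul_one, Matrix.zero_mul, Matrix.mul_zero,
      add_zero, zero_add, Matrix.mul_neg, Matrix.neg_mul]
    rw [← sub_eq_add_neg]
    congr 1
    simp only [← Matrix.mul_assoc]
    rw [e1, Matrix.mul_assoc (M * S⁻¹), e2]
  rw [key, hMT]
  exact posDef_fromBlocks₂₂ Q M hRRP
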